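/- Let p be a prime, k ≥ 1, and l ∈ [k]. Let u = (u_1,…,u_k) ∈ {0,1}^k and let φ(u) be the corresponding linear character of P_{p^k} (with u_j = 1 iff the j-th component character is trivial). Then the sum of φ(u)(x) over all x ∈ P_{p^k} of cycle type a single p^l-cycle (all other points fixed) equals p^k · p^{(p^l−1)/(p−1) − 2l} · ∏_{m=1}^l (p u_m − 1). -/

import Mathlib

open scoped Classical
open Equiv

noncomputable section

/-- `τ` is a single cycle on all of `α` (an `|α|`-cycle). -/
def IsFullCycle {α : Type*} (τ : Perm α) : Prop := ∀ x y : α, ∃ n : ℕ, (τ ^ n) x = y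

/-- The imprimitive (wreath-product) permutation `(f_1,…,f_p; σ)` of `ι × α`:
`(j, y) ↦ (σ j, f j y)`. -/
def wrP {ι α : Type*} (f : ι → Perm α) (σ : Perm ι) : Perm (ι × α) where
  toFun x := (σ x.1, f x.1 x.2)
  invFun x := (σ.symm x.1, (f (σ.symm x.1)).symm x.2)
  left_inv := by rintro ⟨j, y⟩; simp
  right_inv := by rintro ⟨j, y⟩; simp

/-- The underlying set of `p^k` points, realised as the `k`-fold product `(Fin p)^k`. -/
def Om (p : ℕ) : ℕ → Type
  | 0 => Unit
  | (k+1) => Fin p × Om p k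

instance OmFintype (p : ℕ) : (k : ℕ) → Fintype (Om p k)
  | 0 => inferInstanceAs (Fintype Unit)
  | (k+1) => letI := OmFintype p k; inferInstanceAs (Fintype (Fin p × Om p k))

/-- The Sylow `p`-subgroup `P_{p^k} = P_p ≀ ⋯ ≀ P_p` of `S_{p^k}` (as a set of permutations),
where `P_p = ⟨c⟩`. -/
def Pset (p : ℕ) (c : Perm (Fin p)) : (k : ℕ) → Set (Perm (Om p k))
  | 0 => {1}
  | (k+1) => {x | ∃ (f : Fin p → Perm (Om p k)) (σ : Perm (Fin p)),
      (∀ i, f i ∈ Pset p c k) ∧ σ ∈ Subgroup.zpowers c ∧ x = wrP f σ}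

/-- The value of a linear character `χ` of `P_p = ⟨c⟩` at `σ`, extended by zero. -/
def topVal (p : ℕ) (c : Perm (Fin p)) (χ : ↥(Subgroup.zpowers c) →* ℂ)
    (σ : Perm (Fin p)) : ℂ :=
  if h : σ ∈ Subgroup.zpowers c then χ ⟨σ, h⟩ else 0

/-- The linear character `X(ψ_1,…,ψ_k)` of `P_{p^k}` determined by the linear characters
`ψ_1,…,ψ_k` of `P_p`, extended by zero outside of the wreath product:
`X(ψ_1,…,ψ_{k+1})(f_1,…,f_p;σ) = ∏_j X(ψ_1,…,ψ_k)(f_j) · ψ_{k+1}(σ)`. -/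
def XChar (p : ℕ) (c : Perm (Fin p)) :
    (k : ℕ) → (Fin k → (↥(Subgroup.zpowers c) →* ℂ)) → Perm (Om p k) → ℂ
  | 0, _, _ => 1
  | (k+1), ψ, x =>
      if h : ∃ fσ : (Fin p → Perm (Om p k)) × Perm (Fin p), x = wrP fσ.1 fσ.2 then
        (∏ j : Fin p, XChar p c k (fun i => ψ i.castSucc) (h.choose.1 j)) *
          topVal p c (ψ (Fin.last k)) h.choose.2
      else 0

/-- Induction of the function `φ` from the subgroup (given as a set) `S` to the whole group. -/
def indSet {G : Type*} [Group G] [Fintype G] (S : Set G) (φ : G → ℂ) (g : G) : ℂ :=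
  (Nat.card ↥S : ℂ)⁻¹ * ∑ x : G, if x⁻¹ * g * x ∈ S then φ (x⁻¹ * g * x) else 0

section wrPalg
variable {ι α : Type*}

lemma wrP_apply (f : ι → Perm α) (σ : Perm ι) (x : ι × α) :
    wrP f σ x = (σ x.1, f x.1 x.2) := rfl

lemma wrP_mul (f g : ι → Perm α) (σ τ : Perm ι) :
    wrP f σ * wrP g τ = wrP (fun j => f (τ j) * g j) (σ * τ) := by
  ext ⟨j, y⟩ <;> rfl

lemma wrP_one : wrP (fun _ : ι => (1 : Perm α)) 1 = 1 := by
  ext ⟨j, y⟩ <;> rfl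

lemma wrP_injective [Nonempty α] {f g : ι → Perm α} {σ τ : Perm ι}
    (h : wrP f σ = wrP g τ) : f = g ∧ σ = τ := by
  have h1 : ∀ j y, ((σ j, f j y) : ι × α) = (τ j, g j y) := by
    intro j y
    have := congrArg (fun (e : Perm (ι × α)) => e (j, y)) h
    simpa [wrP_apply] using this
  constructor
  · funext j; ext y; exact congrArg Prod.snd (h1 j y)
  · ext j; obtain ⟨y⟩ := ‹Nonempty α›; exact congrArg Prod.fst (h1 j y)

/-- cycle products -/
def cyp (f : ι → Perm α) (σ : Perm ι) : ℕ → ι → Perm α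
  | 0, _ => 1
  | (n+1), j => f ((σ ^ n) j) * cyp f σ n j

lemma wrP_pow (f : ι → Perm α) (σ : Perm ι) (n : ℕ) :
    (wrP f σ) ^ n = wrP (fun j => cyp f σ n j) (σ ^ n) := by
  induction n with
  | zero => simpa [cyp] using (wrP_one (ι := ι) (α := α)).symm
  | succ n ih =>
      rw [pow_succ', ih, wrP_mul, pow_succ']
      rfl

lemma cyp_add (f : ι → Perm α) (σ : Perm ι) (n m : ℕ) (j : ι) :
    cyp f σ (n + m) j = cyp f σ n ((σ ^ m) j) * cyp f σ m j := by
  induction n with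
  | zero => simp [cyp]
  | succ n ih =>
      have : n + 1 + m = (n + m) + 1 := by ring
      rw [this, cyp, cyp, ih, pow_add, mul_assoc]
      rfl

lemma cyp_mul_of_pow_eq_one (f : ι → Perm α) (σ : Perm ι) {q : ℕ} (hq : σ ^ q = 1)
    (m : ℕ) (j : ι) : cyp f σ (m * q) j = (cyp f σ q j) ^ m := by
  induction m with
  | zero => simp [cyp]
  | succ m ih =>
      have h1 : (m + 1) * q = q + m * q := by ring
      have h2 : (σ ^ (m * q)) j = j := by
        rw [mul_comm, pow_mul, hq, one_pow]; rfl
      rw [h1, cyp_add, h2, ih, pow_succ']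
end wrPalg

section PsetGrp
variable {p : ℕ} {c : Perm (Fin p)}

lemma Om_nonempty (hp : 0 < p) : ∀ k, Nonempty (Om p k)
  | 0 => ⟨()⟩
  | (k+1) => by
      have := Om_nonempty hp k
      exact ⟨(⟨0, hp⟩, this.some)⟩

lemma card_Om : ∀ k, Fintype.card (Om p k) = p ^ k
  | 0 => rfl
  | (k+1) => by
      show Fintype.card (Fin p × Om p k) = p ^ (k+1)
      rw [Fintype.card_prod, Fintype.card_fin, card_Om k, pow_succ, mul_comm]

lemma one_mem_Pset (hp : 0 < p) : ∀ k, (1 : Perm (Om p k)) ∈ Pset p c k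
  | 0 => rfl
  | (k+1) => ⟨fun _ => 1, 1, fun _ => one_mem_Pset hp k, one_mem _, wrP_one.symm⟩

lemma wrP_mem_Pset_iff (hp : 0 < p) {k : ℕ} {f : Fin p → Perm (Om p k)} {σ : Perm (Fin p)} :
    wrP f σ ∈ Pset p c (k+1) ↔ (∀ i, f i ∈ Pset p c k) ∧ σ ∈ Subgroup.zpowers c := by
  constructor
  · rintro ⟨g, τ, hg, hτ, hEq⟩
    have := Om_nonempty (p := p) hp k
    obtain ⟨hfg, hστ⟩ := wrP_injective hEq
    subst hfg; subst hστ; exact ⟨hg, hτ⟩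
  · rintro ⟨h1, h2⟩; exact ⟨f, σ, h1, h2, rfl⟩

lemma mul_mem_Pset (hp : 0 < p) : ∀ k, ∀ {x y : Perm (Om p k)},
    x ∈ Pset p c k → y ∈ Pset p c k → x * y ∈ Pset p c k
  | 0, x, y, hx, hy => by
      simp only [Pset, Set.mem_singleton_iff] at *
      rw [hx, hy, one_mul]
  | (k+1), x, y, hx, hy => by
      obtain ⟨f, σ, hf, hσ, rfl⟩ := hx
      obtain ⟨g, τ, hg, hτ, rfl⟩ := hy
      erw [wrP_mul]
      exact ⟨_, _, fun i => mul_mem_Pset hp k (hf _) (hg _), mul_mem hσ hτ, rfl⟩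

lemma pow_mem_Pset (hp : 0 < p) (k : ℕ) {x : Perm (Om p k)} (hx : x ∈ Pset p c k) (n : ℕ) :
    x ^ n ∈ Pset p c k := by
  induction n with
  | zero => simpa using one_mem_Pset hp k
  | succ n ih => rw [pow_succ]; exact mul_mem_Pset hp k ih hx

lemma cyp_mem_Pset (hp : 0 < p) (k : ℕ) {f : Fin p → Perm (Om p k)} {σ : Perm (Fin p)}
    (hf : ∀ i, f i ∈ Pset p c k) (n : ℕ) (j : Fin p) : cyp f σ n j ∈ Pset p c k := by
  induction n with
  | zero => simpa [cyp] using one_mem_Pset hp k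
  | succ n ih => exact mul_mem_Pset hp k (hf _) ih
end PsetGrp

section FC
variable {α : Type*} [Fintype α]

lemma exists_pow_apply_rev (π : Perm α) {u v : α} {b : ℕ} (h : (π ^ b) u = v) :
    ∃ n : ℕ, (π ^ n) v = u := by
  refine ⟨b * (orderOf π - 1), ?_⟩
  have hor : 0 < orderOf π := orderOf_pos π
  have h3 : (π ^ (b * (orderOf π - 1))) ((π ^ b) u) = (π ^ (b * (orderOf π - 1) + b)) u := by
    rw [pow_add]; rfl
  rw [h] at h3
  rw [h3]
  obtain ⟨m, hm⟩ := Nat.exists_eq_succ_of_ne_zero hor.ne'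
  have he : b * (orderOf π - 1) + b = orderOf π * b := by
    rw [hm]; simp [Nat.succ_sub_one]; ring
  rw [he, pow_mul, pow_orderOf_eq_one, one_pow]; rfl

lemma IsFullCycle.isCycle_and_support {x : Perm α} (h2 : 2 ≤ Fintype.card α)
    (h : IsFullCycle x) : x.IsCycle ∧ x.support = Finset.univ := by
  have hne : Nonempty α := Fintype.card_pos_iff.mp (by omega)
  have hfp : ∀ a : α, x a ≠ a := by
    intro a ha
    obtain ⟨b, hb⟩ := Fintype.exists_ne_of_one_lt_card h2 a
    obtain ⟨n, hn⟩ := h a b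
    have key : ∀ n, (x ^ n) a = a := by
      intro n; induction n with
      | zero => rfl
      | succ n ih => rw [pow_succ, Perm.mul_apply, ha, ih]
    exact hb (by rw [← hn, key n])
  have hsup : x.support = Finset.univ := by
    ext a; simp [Perm.mem_support, hfp a]
  refine ⟨⟨Classical.arbitrary α, hfp _, ?_⟩, hsup⟩
  · intro b _
    obtain ⟨n, hn⟩ := h (Classical.arbitrary α) b
    exact ⟨(n : ℤ), by simpa using hn⟩

lemma isFullCycle_iff_cycleType {x : Perm α} (h2 : 2 ≤ Fintype.card α) :
    IsFullCycle x ↔ x.cycleType = {Fintype.card α} := by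
  constructor
  · intro h
    obtain ⟨hc, hs⟩ := h.isCycle_and_support h2
    rw [hc.cycleType, hs]
    simp
  · intro h
    have hcyc : x.IsCycle := by
      rw [← Equiv.Perm.card_cycleType_eq_one, h]; rfl
    have hsup : x.support = Finset.univ := by
      have := Equiv.Perm.sum_cycleType x
      rw [h] at this
      simp only [Multiset.sum_singleton] at this
      exact Finset.eq_univ_of_card _ this.symm
    intro a b
    have ha : a ∈ x.support := hsup ▸ Finset.mem_univ a
    have hb : b ∈ x.support := hsup ▸ Finset.mem_univ b
    have hsc : x.SameCycle a b := hcyc.sameCycle (by simpa [Perm.mem_support] using ha)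
      (by simpa [Perm.mem_support] using hb)
    obtain ⟨i, _, _, hi⟩ := hsc.exists_pow_eq x
    exact ⟨i, hi⟩

lemma IsFullCycle.fixedPointFree {x : Perm α} (h2 : 2 ≤ Fintype.card α)
    (h : IsFullCycle x) : ∀ a, x a ≠ a := by
  intro a
  have := (h.isCycle_and_support h2).2
  have ha : a ∈ x.support := this ▸ Finset.mem_univ a
  simpa [Perm.mem_support] using ha

lemma IsFullCycle.orderOf_eq {x : Perm α} (h2 : 2 ≤ Fintype.card α)
    (h : IsFullCycle x) : orderOf x = Fintype.card α := by
  obtain ⟨hc, hs⟩ := h.isCycle_and_support h2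
  rw [hc.orderOf, hs, Finset.card_univ]

/-- nontrivial powers of a full cycle of prime length are full cycles -/
lemma isFullCycle_of_mem_zpowers {p : ℕ} (hp : p.Prime) {c x : Perm (Fin p)}
    (hc : IsFullCycle c) (hx : x ∈ Subgroup.zpowers c) (hx1 : x ≠ 1) :
    IsFullCycle x := by
  have h2 : 2 ≤ Fintype.card (Fin p) := by
    rw [Fintype.card_fin]; exact hp.two_le
  have hcord : orderOf c = p := by rw [hc.orderOf_eq h2, Fintype.card_fin]
  have hxord : orderOf x = p := by
    have hdvd : orderOf x ∣ p := dvd_trans (orderOf_dvd_of_mem_zpowers hx) (dvd_of_eq hcord)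
    rcases (Nat.Prime.eq_one_or_self_of_dvd hp _ hdvd) with h | h
    · exact absurd (orderOf_eq_one_iff.mp h) hx1
    · exact h
  have hzc : c ∈ Subgroup.zpowers x := by
    have heq : Subgroup.zpowers x = Subgroup.zpowers c := by
      apply SetLike.coe_injective
      apply Set.eq_of_subset_of_ncard_le
      · rintro y ⟨n, rfl⟩
        exact Subgroup.zpow_mem _ hx n
      · rw [← Nat.card_coe_set_eq, ← Nat.card_coe_set_eq]
        show Nat.card (Subgroup.zpowers c) ≤ Nat.card (Subgroup.zpowers x)
        rw [Nat.card_zpowers, Nat.card_zpowers, hcord, hxord]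
      · exact Set.toFinite _
    rw [heq]; exact Subgroup.mem_zpowers c
  obtain ⟨m, hm⟩ := mem_powers_iff_mem_zpowers.mpr hzc
  have hm' : x ^ m = c := hm
  intro a b
  obtain ⟨n, hn⟩ := hc a b
  exact ⟨m * n, by rw [pow_mul, hm', hn]⟩

lemma pow_fixes_iff {p : ℕ} (hp : p.Prime) {c σ : Perm (Fin p)}
    (hc : IsFullCycle c) (hσ : σ ∈ Subgroup.zpowers c) (hσ1 : σ ≠ 1)
    {n : ℕ} {j : Fin p} (h : (σ ^ n) j = j) : p ∣ n := by
  have h2 : 2 ≤ Fintype.card (Fin p) := by rw [Fintype.card_fin]; exact hp.two_le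
  have hσfc := isFullCycle_of_mem_zpowers hp hc hσ hσ1
  have hord : orderOf σ = p := by rw [hσfc.orderOf_eq h2, Fintype.card_fin]
  by_contra hnd
  have hr : σ ^ n ≠ 1 := by
    intro h1
    exact hnd (hord ▸ orderOf_dvd_of_pow_eq_one h1)
  have hmem : σ ^ n ∈ Subgroup.zpowers c := pow_mem hσ n
  exact (isFullCycle_of_mem_zpowers hp hc hmem hr).fixedPointFree h2 j h

lemma pow_p_eq_one_of_mem_zpowers {p : ℕ} (hp : p.Prime) {c σ : Perm (Fin p)}
    (hc : IsFullCycle c) (hσ : σ ∈ Subgroup.zpowers c) : σ ^ p = 1 := by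
  have h2 : 2 ≤ Fintype.card (Fin p) := by rw [Fintype.card_fin]; exact hp.two_le
  have hcord : orderOf c = p := by rw [hc.orderOf_eq h2, Fintype.card_fin]
  obtain ⟨m, hm⟩ := mem_powers_iff_mem_zpowers.mpr hσ
  have hm' : c ^ m = σ := hm
  have hcp : c ^ p = 1 := by have h9 := pow_orderOf_eq_one c; rwa [hcord] at h9
  rw [← hm', ← pow_mul, mul_comm, pow_mul, hcp, one_pow]
end FC
set_option linter.unusedSectionVars false

section BlockDiag
variable {ι α : Type*} [Fintype ι] [DecidableEq ι] [Fintype α] [DecidableEq α]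

/-- fiber equivalence -/
def fiberEquiv (j : ι) : α ≃ {x : ι × α // x.1 = j} where
  toFun y := ⟨(j, y), rfl⟩
  invFun z := z.1.2
  left_inv y := rfl
  right_inv z := by
    rcases z with ⟨⟨i, y⟩, hz⟩
    simp only at hz
    subst hz; rfl

def fiberPerm (f : ι → Perm α) (j : ι) : Perm (ι × α) :=
  (f j).extendDomain (fiberEquiv j)

lemma fiberPerm_apply_same (f : ι → Perm α) (j : ι) (y : α) :
    fiberPerm f j (j, y) = (j, f j y) := by
  have := Equiv.Perm.extendDomain_apply_subtype (f j) (fiberEquiv j)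
    (b := ((j, y) : ι × α)) rfl
  simpa [fiberPerm, fiberEquiv] using this

lemma fiberPerm_apply_ne (f : ι → Perm α) (j i : ι) (y : α) (h : i ≠ j) :
    fiberPerm f j (i, y) = (i, y) :=
  Equiv.Perm.extendDomain_apply_not_subtype (f j) (fiberEquiv j) h

lemma fiberPerm_pairwise (f : ι → Perm α) (s : Finset ι) :
    (s : Set ι).Pairwise (Function.onFun Commute (fiberPerm f)) := by
  intro i _ j _ hij
  apply Equiv.Perm.Disjoint.commute
  rintro ⟨a, y⟩
  by_cases hai : a = i
  · subst hai
    right; exact fiberPerm_apply_ne _ _ _ _ hij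
  · left; exact fiberPerm_apply_ne _ _ _ _ hai

def prodFiber (f : ι → Perm α) (s : Finset ι) : Perm (ι × α) :=
  s.noncommProd (fiberPerm f) (fiberPerm_pairwise f s)

lemma prodFiber_apply (f : ι → Perm α) (s : Finset ι) (i : ι) (y : α) :
    prodFiber f s (i, y) = (i, if i ∈ s then f i y else y) := by
  induction s using Finset.induction with
  | empty => simp [prodFiber]
  | @insert a s ha ih =>
      rw [prodFiber, Finset.noncommProd_insert_of_notMem _ _ _ _ ha, Perm.mul_apply]
      rw [show s.noncommProd (fiberPerm f) _ = prodFiber f s from rfl, ih]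
      by_cases hia : i = a
      · subst hia
        rw [if_neg ha, fiberPerm_apply_same]
        simp
      · rw [fiberPerm_apply_ne _ _ _ _ hia]
        simp [Finset.mem_insert, hia]

lemma wrP_one_eq_prodFiber (f : ι → Perm α) :
    wrP f 1 = prodFiber f Finset.univ := by
  ext ⟨i, y⟩
  · rw [prodFiber_apply]; simp [wrP_apply]
  · rw [prodFiber_apply]; simp [wrP_apply]

lemma cycleType_prodFiber (f : ι → Perm α) (s : Finset ι) :
    (prodFiber f s).cycleType = ∑ j ∈ s, (f j).cycleType := by
  induction s using Finset.induction with
  | empty =>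
      simp only [Finset.sum_empty]
      rw [Equiv.Perm.cycleType_eq_zero]
      rfl
  | @insert a s ha ih =>
      rw [Finset.sum_insert ha, prodFiber, Finset.noncommProd_insert_of_notMem _ _ _ _ ha]
      have hdisj : (fiberPerm f a).Disjoint (prodFiber f s) := by
        rintro ⟨i, y⟩
        by_cases hia : i = a
        · subst hia
          right
          rw [prodFiber_apply, if_neg ha]
        · left
          exact fiberPerm_apply_ne _ _ _ _ hia
      rw [show s.noncommProd (fiberPerm f) _ = prodFiber f s from rfl]
      rw [hdisj.cycleType_mul, ih]
      congr 1
      exact Equiv.Perm.cycleType_extendDomain _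

lemma cycleType_wrP_one (f : ι → Perm α) :
    (wrP f 1).cycleType = ∑ j : ι, (f j).cycleType := by
  rw [wrP_one_eq_prodFiber, cycleType_prodFiber]

lemma sum_multiset_eq_singleton_iff {M : ι → Multiset ℕ} {n : ℕ} :
    ∑ j : ι, M j = {n} ↔ ∃ j, M j = {n} ∧ ∀ i, i ≠ j → M i = 0 := by
  constructor
  · intro h
    have hex : ∃ j, M j ≠ 0 := by
      by_contra hno
      push_neg at hno
      rw [Finset.sum_eq_zero (fun j _ => hno j)] at h
      exact absurd h.symm (by simp)
    obtain ⟨j, hj⟩ := hex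
    have hle : M j ≤ {n} := h ▸ Finset.single_le_sum (f := M) (fun i _ => by positivity) (Finset.mem_univ j)
    have hMj : M j = {n} := ((Multiset.le_singleton).mp hle).resolve_left hj
    refine ⟨j, hMj, ?_⟩
    have hsplit : M j + ∑ i ∈ Finset.univ.erase j, M i = {n} := by
      rw [← h, Finset.add_sum_erase _ M (Finset.mem_univ j)]
    rw [hMj] at hsplit
    have hz : ∑ i ∈ Finset.univ.erase j, M i = 0 := add_eq_left.mp hsplit
    intro i hi
    exact (Finset.sum_eq_zero_iff.mp hz) i (Finset.mem_erase.mpr ⟨hi, Finset.mem_univ i⟩)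
  · rintro ⟨j, hj, hrest⟩
    rw [← Finset.add_sum_erase _ M (Finset.mem_univ j), hj,
      Finset.sum_eq_zero (fun i hi => hrest i (Finset.mem_erase.mp hi).1), add_zero]

lemma cycleType_wrP_one_eq_singleton_iff (f : ι → Perm α) {n : ℕ} :
    (wrP f 1).cycleType = {n} ↔
      ∃ j, (f j).cycleType = {n} ∧ ∀ i, i ≠ j → f i = 1 := by
  rw [cycleType_wrP_one, sum_multiset_eq_singleton_iff]
  refine exists_congr fun j => and_congr_right fun _ => forall_congr' fun i => ?_
  rw [Equiv.Perm.cycleType_eq_zero]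
end BlockDiag
section FullCycleWr
variable {p : ℕ} {α : Type*} [Fintype α]

lemma isFullCycle_of_subsingleton [Subsingleton α] (x : Perm α) : IsFullCycle x :=
  fun a b => ⟨0, Subsingleton.elim _ _⟩

/-- Main structural lemma: for `σ` a nontrivial element of `⟨c⟩` (`c` a full `p`-cycle),
`wrP f σ` is a full cycle iff the cycle product at the base point is a full cycle. -/
lemma isFullCycle_wrP_iff (hp : p.Prime) {c σ : Perm (Fin p)}
    (hc : IsFullCycle c) (hσ : σ ∈ Subgroup.zpowers c) (hσ1 : σ ≠ 1)
    (f : Fin p → Perm α) :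
    IsFullCycle (wrP f σ) ↔ IsFullCycle (cyp f σ p (⟨0, hp.pos⟩ : Fin p)) := by
  set j₀ : Fin p := ⟨0, hp.pos⟩
  set τ := wrP f σ with hτ
  have hσp : σ ^ p = 1 := pow_p_eq_one_of_mem_zpowers hp hc hσ
  have hσfc : IsFullCycle σ := isFullCycle_of_mem_zpowers hp hc hσ hσ1
  set g := cyp f σ p j₀ with hg
  constructor
  · intro h z z'
    obtain ⟨n, hn⟩ := h (j₀, z) (j₀, z')
    rw [wrP_pow] at hn
    have h1 : (σ ^ n) j₀ = j₀ := congrArg Prod.fst hn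
    have h2 : cyp f σ n j₀ z = z' := congrArg Prod.snd hn
    obtain ⟨m, hm⟩ := pow_fixes_iff hp hc hσ hσ1 h1
    refine ⟨m, ?_⟩
    rw [← h2, hm, mul_comm p m, cyp_mul_of_pow_eq_one f σ hσp]
  · intro h
    rintro ⟨j, y⟩ ⟨j', y'⟩
    clear hg hτ
    obtain ⟨a, ha⟩ := hσfc j j₀
    obtain ⟨b, hb⟩ := hσfc j' j₀
    -- forward from (j,y) to fiber j₀
    have hA : (τ ^ a) (j, y) = (j₀, cyp f σ a j y) := by
      rw [wrP_pow, wrP_apply, ha]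
    have hB : (τ ^ b) (j', y') = (j₀, cyp f σ b j' y') := by
      rw [wrP_pow, wrP_apply, hb]
    obtain ⟨b', hb'⟩ := exists_pow_apply_rev τ hB
    obtain ⟨m, hm⟩ := h (cyp f σ a j y) (cyp f σ b j' y')
    have hC : (τ ^ (m * p)) (j₀, cyp f σ a j y) = (j₀, cyp f σ b j' y') := by
      rw [wrP_pow, wrP_apply]
      have hfix : (σ ^ (m * p)) j₀ = j₀ := by
        rw [mul_comm, pow_mul, hσp, one_pow]; rfl
      rw [hfix, cyp_mul_of_pow_eq_one f σ hσp, hm]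
    refine ⟨b' + (m * p + a), ?_⟩
    rw [pow_add, Perm.mul_apply, pow_add, Perm.mul_apply, hA, hC, hb']

/-- with σ nontrivial, `wrP f σ` has no fixed points. -/
lemma wrP_fixedPointFree (hp : p.Prime) {c σ : Perm (Fin p)}
    (hc : IsFullCycle c) (hσ : σ ∈ Subgroup.zpowers c) (hσ1 : σ ≠ 1)
    (f : Fin p → Perm α) (x : Fin p × α) : wrP f σ x ≠ x := by
  have h2 : 2 ≤ Fintype.card (Fin p) := by rw [Fintype.card_fin]; exact hp.two_le
  have hσfc : IsFullCycle σ := isFullCycle_of_mem_zpowers hp hc hσ hσ1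
  intro h
  exact hσfc.fixedPointFree h2 x.1 (congrArg Prod.fst h)

lemma support_wrP_eq_univ (hp : p.Prime) {c σ : Perm (Fin p)}
    (hc : IsFullCycle c) (hσ : σ ∈ Subgroup.zpowers c) (hσ1 : σ ≠ 1)
    (f : Fin p → Perm α) : (wrP f σ).support = Finset.univ := by
  classical
  ext x; simp [Equiv.Perm.mem_support, wrP_fixedPointFree hp hc hσ hσ1 f x]
end FullCycleWr
section Reindex
variable {α β : Type*} [Fintype α] [Fintype β]

lemma sum_reindex (W : α → β) (F : β → ℂ)
    (hinj : ∀ a b, F (W a) ≠ 0 → W a = W b → a = b)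
    (hsupp : ∀ x, F x ≠ 0 → ∃ a, W a = x) :
    ∑ x : β, F x = ∑ a : α, F (W a) := by
  classical
  have h1 : ∑ a : α, F (W a) = ∑ a ∈ Finset.univ.filter (fun a => F (W a) ≠ 0), F (W a) :=
    (Finset.sum_filter_ne_zero _).symm
  have h2 : ∑ a ∈ Finset.univ.filter (fun a => F (W a) ≠ 0), F (W a)
      = ∑ x ∈ (Finset.univ.filter (fun a => F (W a) ≠ 0)).image W, F x := by
    rw [Finset.sum_image]
    intro a ha b hb hab
    exact hinj a b (by simpa using ha) hab
  rw [h1, h2]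
  apply (Finset.sum_subset (Finset.subset_univ _) _).symm
  intro x _ hx
  by_contra hFx
  obtain ⟨a, ha⟩ := hsupp x hFx
  apply hx
  apply Finset.mem_image.mpr
  exact ⟨a, Finset.mem_filter.mpr ⟨Finset.mem_univ a, by rw [ha]; exact hFx⟩, ha⟩
end Reindex

section CharSum
lemma sum_char {G : Type*} [Group G] [Fintype G] (χ : G →* ℂ) :
    ∑ g : G, χ g = if χ = 1 then (Fintype.card G : ℂ) else 0 := by
  split_ifs with h
  · subst h; simp
  · have hex : ∃ g₀ : G, χ g₀ ≠ 1 := by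
      by_contra hno
      push_neg at hno
      exact h (MonoidHom.ext fun g => by rw [hno g]; rfl)
    obtain ⟨g₀, hg₀⟩ := hex
    have key : χ g₀ * ∑ g : G, χ g = ∑ g : G, χ g := by
      rw [Finset.mul_sum]
      rw [← Equiv.sum_comp (Equiv.mulLeft g₀) (fun g => χ g)]
      apply Finset.sum_congr rfl
      intro g _
      simp [map_mul]
    have := mul_eq_zero.mp (by linear_combination key : (χ g₀ - 1) * ∑ g : G, χ g = 0)
    rcases this with h1 | h2
    · exact absurd (by linear_combination h1) hg₀
    · exact h2
end CharSum

section XCharLemmas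
variable {p : ℕ} {c : Perm (Fin p)}

lemma topVal_one (χ : ↥(Subgroup.zpowers c) →* ℂ) : topVal p c χ 1 = 1 := by
  rw [topVal, dif_pos (one_mem _)]
  have : (⟨1, one_mem _⟩ : ↥(Subgroup.zpowers c)) = 1 := rfl
  rw [this, map_one]

lemma topVal_mem (χ : ↥(Subgroup.zpowers c) →* ℂ) {σ : Perm (Fin p)}
    (h : σ ∈ Subgroup.zpowers c) : topVal p c χ σ = χ ⟨σ, h⟩ := dif_pos h

lemma topVal_mul (χ : ↥(Subgroup.zpowers c) →* ℂ) {σ τ : Perm (Fin p)}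
    (hσ : σ ∈ Subgroup.zpowers c) (hτ : τ ∈ Subgroup.zpowers c) :
    topVal p c χ (σ * τ) = topVal p c χ σ * topVal p c χ τ := by
  rw [topVal_mem χ hσ, topVal_mem χ hτ, topVal_mem χ (mul_mem hσ hτ), ← map_mul]
  rfl

lemma XChar_wrP (hp : 0 < p) {k : ℕ} (ψ : Fin (k+1) → (↥(Subgroup.zpowers c) →* ℂ))
    (f : Fin p → Perm (Om p k)) (σ : Perm (Fin p)) :
    XChar p c (k+1) ψ (wrP f σ) =
      (∏ j : Fin p, XChar p c k (fun i => ψ i.castSucc) (f j)) *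
        topVal p c (ψ (Fin.last k)) σ := by
  have hne := Om_nonempty (p := p) hp k
  have hex : ∃ fσ : (Fin p → Perm (Om p k)) × Perm (Fin p), wrP f σ = wrP fσ.1 fσ.2 :=
    ⟨(f, σ), rfl⟩
  refine (XChar.eq_2 _ _ _ _ _).trans ((dif_pos hex).trans ?_)
  obtain ⟨h1, h2⟩ := wrP_injective hex.choose_spec
  erw [← h1, ← h2]

lemma XChar_one (hp : 0 < p) : ∀ (k : ℕ) (ψ : Fin k → (↥(Subgroup.zpowers c) →* ℂ)),
    XChar p c k ψ 1 = 1
  | 0, ψ => rfl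
  | (k+1), ψ => by
      erw [← wrP_one, XChar_wrP hp]
      rw [topVal_one, mul_one]
      apply Finset.prod_eq_one
      intro j _
      exact XChar_one hp k _

lemma XChar_mul (hp : 0 < p) : ∀ (k : ℕ) (ψ : Fin k → (↥(Subgroup.zpowers c) →* ℂ))
    {x y : Perm (Om p k)}, x ∈ Pset p c k → y ∈ Pset p c k →
    XChar p c k ψ (x * y) = XChar p c k ψ x * XChar p c k ψ y
  | 0, ψ, x, y, hx, hy => by simp [XChar]
  | (k+1), ψ, x, y, hx, hy => by
      obtain ⟨f, σ, hf, hσ, rfl⟩ := hx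
      obtain ⟨g, τ, hg, hτ, rfl⟩ := hy
      erw [wrP_mul]
      rw [XChar_wrP hp, XChar_wrP hp, XChar_wrP hp]
      rw [topVal_mul _ hσ hτ]
      have hprod : ∏ j : Fin p, XChar p c k (fun i => ψ i.castSucc) (f (τ j) * g j)
          = (∏ j : Fin p, XChar p c k (fun i => ψ i.castSucc) (f j)) *
            ∏ j : Fin p, XChar p c k (fun i => ψ i.castSucc) (g j) := by
        calc ∏ j : Fin p, XChar p c k (fun i => ψ i.castSucc) (f (τ j) * g j)
            = ∏ j : Fin p, XChar p c k (fun i => ψ i.castSucc) (f (τ j)) *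
                XChar p c k (fun i => ψ i.castSucc) (g j) :=
              Finset.prod_congr rfl fun j _ => XChar_mul hp k _ (hf _) (hg _)
          _ = (∏ j : Fin p, XChar p c k (fun i => ψ i.castSucc) (f (τ j))) *
                ∏ j : Fin p, XChar p c k (fun i => ψ i.castSucc) (g j) :=
              Finset.prod_mul_distrib
          _ = _ := by rw [Equiv.prod_comp τ (fun j => XChar p c k (fun i => ψ i.castSucc) (f j))]
      rw [hprod]
      ring

lemma XChar_cyp (hp : 0 < p) (k : ℕ) (ψ : Fin k → (↥(Subgroup.zpowers c) →* ℂ))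
    {f : Fin p → Perm (Om p k)} {σ : Perm (Fin p)} (hf : ∀ i, f i ∈ Pset p c k)
    (n : ℕ) (j : Fin p) :
    XChar p c k ψ (cyp f σ n j) = ∏ i ∈ Finset.range n, XChar p c k ψ (f ((σ ^ i) j)) := by
  induction n with
  | zero => simpa [cyp] using XChar_one hp k ψ
  | succ n ih =>
      rw [cyp, XChar_mul hp k ψ (hf _) (cyp_mem_Pset hp k hf n j), ih,
        Finset.prod_range_succ]
      ring
end XCharLemmas

lemma geom_succ (p k : ℕ) :
    (∑ i ∈ Finset.range k, p ^ i) * p + 1 = ∑ i ∈ Finset.range (k+1), p ^ i := by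
  induction k with
  | zero => simp
  | succ k ih =>
      rw [Finset.sum_range_succ, add_mul, Finset.sum_range_succ (n := k+1), ← ih]
      ring

section CardPset
variable {p : ℕ} {c : Perm (Fin p)}

lemma card_Pset (hp : Nat.Prime p) (hc : IsFullCycle c) :
    ∀ k, Nat.card (Pset p c k) = p ^ (∑ i ∈ Finset.range k, p ^ i)
  | 0 => by
      simp [Pset, Nat.card_eq_fintype_card]
  | (k+1) => by
      have hne := Om_nonempty (p := p) hp.pos k
      have h2 : 2 ≤ Fintype.card (Fin p) := by rw [Fintype.card_fin]; exact hp.two_le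
      have hcord : orderOf c = p := by rw [hc.orderOf_eq h2, Fintype.card_fin]
      have hbij : Function.Bijective
          (fun Fs : (Fin p → ↥(Pset p c k)) × ↥(Subgroup.zpowers c) =>
            (⟨wrP (fun i => (Fs.1 i : Perm (Om p k))) (Fs.2 : Perm (Fin p)),
              (wrP_mem_Pset_iff hp.pos).mpr ⟨fun i => (Fs.1 i).2, Fs.2.2⟩⟩ :
              ↥(Pset p c (k+1)))) := by
        constructor
        · rintro ⟨F, s⟩ ⟨G, t⟩ h
          have h' : wrP (fun i => (F i : Perm (Om p k))) (s : Perm (Fin p))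
              = wrP (fun i => (G i : Perm (Om p k))) (t : Perm (Fin p)) :=
            Subtype.ext_iff.mp h
          obtain ⟨h1, h2⟩ := wrP_injective h'
          have hF : F = G := by funext i; exact Subtype.ext (congrFun h1 i)
          have hs : s = t := Subtype.ext h2
          rw [hF, hs]
        · rintro ⟨x, hx⟩
          obtain ⟨f, σ, hf, hσ, rfl⟩ := hx
          exact ⟨(fun i => ⟨f i, hf i⟩, ⟨σ, hσ⟩), rfl⟩
      rw [← Nat.card_eq_of_bijective _ hbij]
      rw [Nat.card_prod, Nat.card_fun, Nat.card_zpowers, hcord]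
      rw [Nat.card_eq_fintype_card (α := Fin p), Fintype.card_fin]
      rw [card_Pset hp hc k]
      rw [← pow_mul, ← pow_succ, geom_succ]
end CardPset
lemma cycleType_eq_of_instances {α : Type*} (F1 F2 : Fintype α) (D1 D2 : DecidableEq α)
    (x : Equiv.Perm α) :
    @Equiv.Perm.cycleType α F1 D1 x = @Equiv.Perm.cycleType α F2 D2 x := by
  have hF : F1 = F2 := Subsingleton.elim _ _
  subst hF
  have hD : D1 = D2 := Subsingleton.elim _ _
  subst hD
  rfl

section MoreGrp
variable {p : ℕ} {c : Perm (Fin p)}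

lemma inv_mem_Pset (hp : 0 < p) : ∀ k, ∀ {x : Perm (Om p k)},
    x ∈ Pset p c k → x⁻¹ ∈ Pset p c k
  | 0, x, hx => by
      simp only [Pset, Set.mem_singleton_iff] at *
      rw [hx]; exact inv_one
  | (k+1), x, hx => by
      obtain ⟨f, σ, hf, hσ, rfl⟩ := hx
      have hinv : (wrP f σ)⁻¹ = wrP (fun j => (f (σ⁻¹ j))⁻¹) σ⁻¹ := by
        apply inv_eq_of_mul_eq_one_right
        rw [wrP_mul]
        have : (fun j => f (σ⁻¹ j) * (f (σ⁻¹ j))⁻¹) = fun _ => (1 : Perm (Om p k)) := by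
          funext j; simp
        rw [this, mul_inv_cancel]
        exact wrP_one
      erw [hinv]
      exact ⟨_, _, fun i => inv_mem_Pset hp k (hf _), inv_mem hσ, rfl⟩

lemma pow_apply_ne_of_lt (hp : p.Prime) {σ : Perm (Fin p)} (hc : IsFullCycle c)
    (hσ : σ ∈ Subgroup.zpowers c) (hσ1 : σ ≠ 1) {m n : ℕ} (hmn : m < n) (hnp : n < p)
    (j : Fin p) : (σ ^ m) j ≠ (σ ^ n) j := by
  intro h
  have h1 : (σ ^ (n - m)) ((σ ^ m) j) = (σ ^ m) j := by
    have : σ ^ (n - m) * σ ^ m = σ ^ n := by rw [← pow_add]; congr 1; omega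
    rw [← Perm.mul_apply, this, ← h]
  have h2 := pow_fixes_iff hp hc hσ hσ1 h1
  have h3 := Nat.le_of_dvd (by omega) h2
  omega

lemma not_isFullCycle_wrP_one {α : Type*} (hp : 2 ≤ p) (f : Fin p → Perm α)
    [Nonempty α] : ¬ IsFullCycle (wrP f (1 : Perm (Fin p))) := by
  intro h
  obtain ⟨y⟩ := ‹Nonempty α›
  obtain ⟨n, hn⟩ := h (⟨0, by omega⟩, y) (⟨1, by omega⟩, y)
  rw [wrP_pow] at hn
  have := congrArg Prod.fst hn
  simp only [wrP_apply, one_pow, Perm.one_apply] at this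
  exact absurd (congrArg Fin.val this) (by simp)
end MoreGrp

section Master
variable {p : ℕ} {c : Perm (Fin p)}

def Gam (p : ℕ) (c : Perm (Fin p)) (ψ' : ℕ → (↥(Subgroup.zpowers c) →* ℂ)) (k l : ℕ) : ℂ :=
  ∑ x : Perm (Om p k), if x ∈ Pset p c k ∧ x.cycleType = {p ^ l} then
    XChar p c k (fun i : Fin k => ψ' i) x else 0

def GamFC (p : ℕ) (c : Perm (Fin p)) (ψ' : ℕ → (↥(Subgroup.zpowers c) →* ℂ)) (k : ℕ) : ℂ :=
  ∑ x : Perm (Om p k), if x ∈ Pset p c k ∧ IsFullCycle x then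
    XChar p c k (fun i : Fin k => ψ' i) x else 0

variable (ψ' : ℕ → (↥(Subgroup.zpowers c) →* ℂ))

lemma GamFC_zero : GamFC p c ψ' 0 = 1 := by
  have hsub : Subsingleton (Perm (Om p 0)) :=
    inferInstanceAs (Subsingleton (Perm Unit))
  have huniv : (Finset.univ : Finset (Perm (Om p 0))) = {1} := by
    apply Finset.eq_singleton_iff_unique_mem.mpr
    exact ⟨Finset.mem_univ _, fun x _ => Subsingleton.elim x 1⟩
  rw [GamFC, huniv, Finset.sum_singleton, if_pos]
  · rfl
  constructor
  · exact rfl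
  · intro a b
    have : Subsingleton (Om p 0) := inferInstanceAs (Subsingleton Unit)
    exact ⟨0, Subsingleton.elim _ _⟩

lemma GamFC_eq_Gam (hp : p.Prime) (k : ℕ) (hk : 1 ≤ k) :
    GamFC p c ψ' k = Gam p c ψ' k k := by
  rw [GamFC, Gam]
  apply Finset.sum_congr rfl
  intro x _
  congr 1
  apply propext
  apply and_congr_right
  intro _
  have h2 : 2 ≤ Fintype.card (Om p k) := by
    rw [card_Om]
    calc 2 ≤ p := hp.two_le
    _ = p ^ 1 := (pow_one p).symm
    _ ≤ p ^ k := Nat.pow_le_pow_right hp.pos hk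
  rw [isFullCycle_iff_cycleType h2, card_Om]

/-- Recursion for l ≤ k. -/
lemma Gam_succ (hp : p.Prime) (hc : IsFullCycle c) (k l : ℕ) (hl : 1 ≤ l) (hlk : l ≤ k) :
    Gam p c ψ' (k+1) l = p * Gam p c ψ' k l := by
  classical
  have hne := Om_nonempty (p := p) hp.pos k
  set V : Fin p × Perm (Om p k) → (Fin p → Perm (Om p k)) :=
    fun jg i => if i = jg.1 then jg.2 else 1 with hV
  set W : Fin p × Perm (Om p k) → Perm (Om p (k+1)) := fun jg => wrP (V jg) 1 with hW
  set F : Perm (Om p (k+1)) → ℂ := fun x =>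
    if x ∈ Pset p c (k+1) ∧ x.cycleType = {p ^ l} then
      XChar p c (k+1) (fun i : Fin (k+1) => ψ' i) x else 0 with hF
  have key : ∀ jg : Fin p × Perm (Om p k), F (W jg) =
      if jg.2 ∈ Pset p c k ∧ jg.2.cycleType = {p ^ l} then
        XChar p c k (fun i : Fin k => ψ' i) jg.2 else 0 := by
    rintro ⟨j, g⟩
    have hct : (W (j,g)).cycleType = g.cycleType := by
      have hglue : (W (j,g)).cycleType =
          Equiv.Perm.cycleType (wrP (V (j,g)) (1 : Perm (Fin p))) :=
        cycleType_eq_of_instances _ _ _ _ _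
      rw [hglue, cycleType_wrP_one]
      have hVsum : ∀ i : Fin p, (V (j,g) i).cycleType =
          if i = j then g.cycleType else 0 := by
        intro i
        by_cases hij : i = j
        · simp [hV, hij]
        · simp [hV, hij, Equiv.Perm.cycleType_eq_zero]
      rw [Finset.sum_congr rfl (fun i _ => hVsum i)]
      simp
    have hmem : W (j,g) ∈ Pset p c (k+1) ↔ g ∈ Pset p c k := by
      have h0 : W (j,g) = wrP (V (j,g)) 1 := rfl
      rw [show W (j,g) ∈ Pset p c (k+1) ↔ _ from wrP_mem_Pset_iff hp.pos]
      constructor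
      · rintro ⟨h1, _⟩
        have := h1 j
        simpa [hV] using this
      · intro hg
        refine ⟨fun i => ?_, one_mem _⟩
        by_cases hij : i = j
        · simpa [hV, hij] using hg
        · simpa [hV, hij] using one_mem_Pset (c := c) hp.pos k
    have hval : XChar p c (k+1) (fun i : Fin (k+1) => ψ' i) (W (j,g)) =
        XChar p c k (fun i : Fin k => ψ' i) g := by
      have h0 : XChar p c (k+1) (fun i : Fin (k+1) => ψ' i) (W (j,g))
          = XChar p c (k+1) (fun i : Fin (k+1) => ψ' i) (wrP (V (j,g)) 1) := rfl
      rw [h0, XChar_wrP hp.pos, topVal_one, mul_one]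
      have hX : ∀ i : Fin p, XChar p c k
          (fun i : Fin k => ψ' (((Fin.castSucc i) : Fin (k+1)) : ℕ)) (V (j,g) i) =
          if i = j then XChar p c k (fun i : Fin k => ψ' i) g else 1 := by
        intro i
        by_cases hij : i = j
        · simp [hV, hij, Fin.coe_castSucc]
        · simp only [hV, hij, ite_false]
          exact XChar_one hp.pos k _
      rw [Finset.prod_congr rfl (fun i _ => hX i)]
      simp
    simp only [hF]
    rw [show (W (j,g)).cycleType = g.cycleType from hct]
    by_cases hcond : g ∈ Pset p c k ∧ g.cycleType = {p ^ l}
    · rw [if_pos ⟨hmem.mpr hcond.1, hcond.2⟩, if_pos hcond, hval]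
    · rw [if_neg, if_neg hcond]
      intro hcon
      exact hcond ⟨hmem.mp hcon.1, hcon.2⟩
  have hre : ∑ x : Perm (Om p (k+1)), F x = ∑ jg : Fin p × Perm (Om p k), F (W jg) := by
    apply sum_reindex
    · rintro ⟨j, g⟩ ⟨j', g'⟩ hFW hWW
      rw [key] at hFW
      have hg1 : g ≠ 1 := by
        intro h1
        apply hFW
        rw [if_neg]
        rintro ⟨_, hctg⟩
        rw [h1] at hctg
        simp only [Equiv.Perm.cycleType_one] at hctg
        exact absurd hctg.symm (by simp)
      have hVV := (wrP_injective (show wrP (V (j,g)) 1 = wrP (V (j',g')) 1 from hWW)).1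
      have hVj := congrFun hVV j
      simp only [hV, if_pos rfl] at hVj
      by_cases hjj : j = j'
      · subst hjj
        simp only [if_pos rfl] at hVj
        rw [Prod.ext_iff]
        refine ⟨rfl, by simpa using hVj⟩
      · rw [if_neg hjj] at hVj
        exact absurd hVj hg1
    · intro x hFx
      simp only [hF] at hFx
      by_cases hcond : x ∈ Pset p c (k+1) ∧ x.cycleType = {p ^ l}
      swap
      · rw [if_neg hcond] at hFx; exact absurd rfl hFx
      obtain ⟨⟨f, σ, hf, hσ, rfl⟩, hct⟩ := hcond
      have hσ1 : σ = 1 := by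
        by_contra hσ1
        have hsup := support_wrP_eq_univ hp hc hσ hσ1 f
        have hsum := Equiv.Perm.sum_cycleType (wrP f σ)
        have hglue : Equiv.Perm.cycleType (wrP f σ) = {p ^ l} :=
          (cycleType_eq_of_instances _ _ _ _ _).trans hct
        rw [hsup, hglue] at hsum
        simp only [Multiset.sum_singleton, Finset.card_univ, Fintype.card_prod,
          Fintype.card_fin] at hsum
        rw [card_Om k] at hsum
        have hpe : p ^ l = p ^ (k+1) := by rw [hsum, pow_succ]; ring
        have := Nat.pow_right_injective hp.two_le hpe
        omega
      subst hσ1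
      have hct' : Equiv.Perm.cycleType (α := Fin p × Om p k) (wrP f 1) = {p ^ l} :=
        (cycleType_eq_of_instances _ _ _ _ _).trans hct
      obtain ⟨j, hj, hrest⟩ := (cycleType_wrP_one_eq_singleton_iff f).mp hct'
      refine ⟨(j, f j), ?_⟩
      show wrP (V (j, f j)) 1 = wrP f 1
      congr 1
      funext i
      by_cases hij : i = j
      · simp [hV, hij]
      · simp only [hV, hij, ite_false]
        exact (hrest i hij).symm
  calc Gam p c ψ' (k+1) l = ∑ x : Perm (Om p (k+1)), F x := rfl
    _ = ∑ jg : Fin p × Perm (Om p k), F (W jg) := hre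
    _ = ∑ jg : Fin p × Perm (Om p k),
        (if jg.2 ∈ Pset p c k ∧ jg.2.cycleType = {p ^ l} then
          XChar p c k (fun i : Fin k => ψ' i) jg.2 else 0) :=
        Finset.sum_congr rfl (fun jg _ => key jg)
    _ = ∑ j : Fin p, ∑ g : Perm (Om p k),
        (if g ∈ Pset p c k ∧ g.cycleType = {p ^ l} then
          XChar p c k (fun i : Fin k => ψ' i) g else 0) := Fintype.sum_prod_type _
    _ = ∑ _j : Fin p, Gam p c ψ' k l := rfl
    _ = p * Gam p c ψ' k l := by simp [Finset.sum_const]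
end Master
section R2
variable {p : ℕ} {c : Perm (Fin p)}

def splitAt {β : Type*} (i0 : Fin p) : (Fin p → β) ≃ β × ({j : Fin p // j ≠ i0} → β) where
  toFun h := (h i0, fun j => h j)
  invFun gt := fun j => if hj : j = i0 then gt.1 else gt.2 ⟨j, hj⟩
  left_inv h := by
    funext j
    by_cases hj : j = i0
    · subst hj; simp
    · simp [hj]
  right_inv gt := by
    refine Prod.ext (by simp) ?_
    funext j
    simp [j.2]

variable (ψ' : ℕ → (↥(Subgroup.zpowers c) →* ℂ))

lemma cyp_mem_Pset' (hp : 0 < p) (k : ℕ) {f : Fin p → Perm (Om p k)} {σ : Perm (Fin p)}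
    {j : Fin p} : ∀ {n : ℕ}, (∀ m < n, f ((σ ^ m) j) ∈ Pset p c k) →
    cyp f σ n j ∈ Pset p c k
  | 0, _ => by simpa [cyp] using one_mem_Pset hp k
  | (n+1), h => by
      exact mul_mem_Pset hp k (h n (by omega))
        (cyp_mem_Pset' hp k (fun m hm => h m (by omega)))

lemma cyp_congr {k : ℕ} {f f' : Fin p → Perm (Om p k)} {σ : Perm (Fin p)} {j : Fin p} :
    ∀ {n : ℕ}, (∀ m < n, f ((σ ^ m) j) = f' ((σ ^ m) j)) →
    cyp f σ n j = cyp f' σ n j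
  | 0, _ => rfl
  | (n+1), h => by
      show f ((σ ^ n) j) * cyp f σ n j = f' ((σ ^ n) j) * cyp f' σ n j
      rw [h n (by omega), cyp_congr (fun m hm => h m (by omega))]

/-- inner sum over `f` for fixed nontrivial `σ`. -/
lemma Tsum (hp : p.Prime) (hc : IsFullCycle c) (k : ℕ) {σ : Perm (Fin p)}
    (hσ : σ ∈ Subgroup.zpowers c) (hσ1 : σ ≠ 1) :
    ∑ f : Fin p → Perm (Om p k),
      (if (∀ i, f i ∈ Pset p c k) ∧ IsFullCycle (cyp f σ p (⟨0, hp.pos⟩ : Fin p)) then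
        ∏ i : Fin p, XChar p c k (fun i : Fin k => ψ' i) (f i) else 0) =
    (Nat.card (Pset p c k) : ℂ) ^ (p - 1) * GamFC p c ψ' k := by
  classical
  set j₀ : Fin p := ⟨0, hp.pos⟩
  set i0 : Fin p := (σ ^ (p-1)) j₀ with hi0
  set X : Perm (Om p k) → ℂ := XChar p c k (fun i : Fin k => ψ' i) with hX
  have hp1 : p - 1 + 1 = p := Nat.succ_pred_eq_of_pos hp.pos
  have hcyp_split : ∀ f : Fin p → Perm (Om p k),
      cyp f σ p j₀ = f i0 * cyp f σ (p-1) j₀ := by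
    intro f
    have h : cyp f σ (p-1+1) j₀ = f ((σ^(p-1)) j₀) * cyp f σ (p-1) j₀ := rfl
    rw [hp1] at h
    exact h
  have hidx : ∀ m, m < p - 1 → (σ ^ m) j₀ ≠ i0 := by
    intro m hm
    exact pow_apply_ne_of_lt hp hc hσ hσ1 (by omega) (by omega) j₀
  -- the substitution map
  set M : (Fin p → Perm (Om p k)) → (Fin p → Perm (Om p k)) :=
    fun f => Function.update f i0 (cyp f σ p j₀) with hM
  have hMoff : ∀ f i, i ≠ i0 → M f i = f i := by
    intro f i hi
    simp [hM, Function.update_of_ne hi]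
  have hMat : ∀ f, M f i0 = cyp f σ p j₀ := by
    intro f; simp [hM]
  have hMinj : Function.Injective M := by
    intro f f' h
    have hoff : ∀ i, i ≠ i0 → f i = f' i := by
      intro i hi
      rw [← hMoff f i hi, ← hMoff f' i hi, h]
    have hcyp_eq : cyp f σ (p-1) j₀ = cyp f' σ (p-1) j₀ :=
      cyp_congr (fun m hm => hoff _ (hidx m hm))
    have hat : cyp f σ p j₀ = cyp f' σ p j₀ := by
      rw [← hMat f, ← hMat f', h]
    rw [hcyp_split, hcyp_split, hcyp_eq] at hat
    have hfi0 : f i0 = f' i0 := mul_right_cancel hat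
    funext i
    by_cases hi : i = i0
    · rw [hi]; exact hfi0
    · exact hoff i hi
  have hMbij : Function.Bijective M := (Finite.injective_iff_bijective).mp hMinj
  -- transfer of the summand
  have hterm : ∀ f : Fin p → Perm (Om p k),
      (if (∀ i, f i ∈ Pset p c k) ∧ IsFullCycle (cyp f σ p j₀) then
        ∏ i : Fin p, X (f i) else 0) =
      (if (∀ i, M f i ∈ Pset p c k) ∧ IsFullCycle (M f i0) then X (M f i0) else 0) := by
    intro f
    have hcondiff : ((∀ i, f i ∈ Pset p c k) ∧ IsFullCycle (cyp f σ p j₀)) ↔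
        ((∀ i, M f i ∈ Pset p c k) ∧ IsFullCycle (M f i0)) := by
      rw [hMat]
      apply and_congr_left
      intro _
      constructor
      · intro hf i
        by_cases hi : i = i0
        · rw [hi, hMat]
          exact cyp_mem_Pset hp.pos k hf p j₀
        · rw [hMoff f i hi]; exact hf i
      · intro hf i
        by_cases hi : i = i0
        · have h1 : cyp f σ p j₀ ∈ Pset p c k := by rw [← hMat f]; exact hf i0
          have h2 : cyp f σ (p-1) j₀ ∈ Pset p c k := by
            apply cyp_mem_Pset' hp.pos k
            intro m hm
            rw [← hMoff f _ (hidx m hm)]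
            exact hf _
          have h3 : f i0 = cyp f σ p j₀ * (cyp f σ (p-1) j₀)⁻¹ := by
            rw [hcyp_split f, mul_assoc, mul_inv_cancel, mul_one]
          rw [hi, h3]
          exact mul_mem_Pset hp.pos k h1 (inv_mem_Pset hp.pos k h2)
        · rw [← hMoff f i hi]; exact hf i
    by_cases hcond : (∀ i, f i ∈ Pset p c k) ∧ IsFullCycle (cyp f σ p j₀)
    · rw [if_pos hcond, if_pos (hcondiff.mp hcond), hMat]
      -- value: ∏ X (f i) = X (cyp f σ p j₀)
      have hXcyp : X (cyp f σ p j₀) = ∏ m ∈ Finset.range p, X (f ((σ ^ m) j₀)) :=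
        XChar_cyp hp.pos k _ hcond.1 p j₀
      have hbijidx : Function.Bijective (fun m : Fin p => (σ ^ (m : ℕ)) j₀) := by
        apply Finite.injective_iff_bijective.mp
        intro m m' hmm
        by_contra hne
        rcases Nat.lt_or_ge (m : ℕ) (m' : ℕ) with hlt | hge
        · exact pow_apply_ne_of_lt hp hc hσ hσ1 hlt m'.2 j₀ hmm
        · have hlt' : (m' : ℕ) < (m : ℕ) := by
            rcases Nat.eq_or_lt_of_le hge with h | h
            · exact absurd (Fin.ext h.symm) hne
            · exact h
          exact pow_apply_ne_of_lt hp hc hσ hσ1 hlt' m.2 j₀ hmm.symm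
      rw [hXcyp, ← Fin.prod_univ_eq_prod_range (fun m => X (f ((σ ^ m) j₀))) p]
      exact (hbijidx.prod_comp (fun i => X (f i))).symm
    · rw [if_neg hcond, if_neg (fun h => hcond (hcondiff.mpr h))]
  rw [Fintype.sum_bijective M hMbij _
    (fun h => if (∀ i, h i ∈ Pset p c k) ∧ IsFullCycle (h i0) then X (h i0) else 0) hterm]
  -- now sum over h of ite ((∀ i, h i ∈ P) ∧ FC (h i0)) (X (h i0))
  have hsplit := Equiv.sum_comp (splitAt (β := Perm (Om p k)) i0).symm
    (fun h : Fin p → Perm (Om p k) =>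
      if (∀ i, h i ∈ Pset p c k) ∧ IsFullCycle (h i0) then X (h i0) else 0)
  rw [← hsplit, Fintype.sum_prod_type]
  have heval : ∀ (g : Perm (Om p k)) (t : {j : Fin p // j ≠ i0} → Perm (Om p k)),
      (if (∀ i, (splitAt i0).symm (g, t) i ∈ Pset p c k) ∧
          IsFullCycle ((splitAt i0).symm (g, t) i0) then X ((splitAt i0).symm (g, t) i0)
        else 0) =
      (if g ∈ Pset p c k ∧ IsFullCycle g then X g else 0) *
        (if ∀ j : {j : Fin p // j ≠ i0}, t j ∈ Pset p c k then (1:ℂ) else 0) := by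
    intro g t
    have h1 : (splitAt i0).symm (g, t) i0 = g := by simp [splitAt]
    have h2 : ∀ j : {j : Fin p // j ≠ i0}, (splitAt i0).symm (g, t) j = t j := by
      intro j; simp [splitAt, j.2]
    have h3 : (∀ i, (splitAt i0).symm (g, t) i ∈ Pset p c k) ↔
        (g ∈ Pset p c k ∧ ∀ j : {j : Fin p // j ≠ i0}, t j ∈ Pset p c k) := by
      constructor
      · intro h
        refine ⟨h1 ▸ h i0, fun j => (h2 j) ▸ h j⟩
      · rintro ⟨hg, ht⟩ i
        by_cases hi : i = i0
        · subst hi; rw [h1]; exact hg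
        · rw [show ((splitAt i0).symm (g, t)) i = t ⟨i, hi⟩ by simp [splitAt, hi]]
          exact ht _
      
    simp only [h1, h3]
    by_cases hg : g ∈ Pset p c k ∧ IsFullCycle g
    · by_cases ht : ∀ j : {j : Fin p // j ≠ i0}, t j ∈ Pset p c k
      · rw [if_pos ⟨⟨hg.1, ht⟩, hg.2⟩, if_pos hg, if_pos ht, mul_one]
      · rw [if_neg (fun h => ht h.1.2), if_neg ht, mul_zero]
    · by_cases ht : ∀ j : {j : Fin p // j ≠ i0}, t j ∈ Pset p c k
      · rw [if_neg (fun h => hg ⟨h.1.1, h.2⟩), if_neg hg, zero_mul]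
      · rw [if_neg (fun h => ht h.1.2), if_neg ht, mul_zero]
  rw [Finset.sum_congr rfl (fun g _ => Finset.sum_congr rfl (fun t _ => heval g t))]
  rw [← Finset.sum_mul_sum]
  have hcount : ∑ t : {j : Fin p // j ≠ i0} → Perm (Om p k),
      (if ∀ j : {j : Fin p // j ≠ i0}, t j ∈ Pset p c k then (1:ℂ) else 0) =
      (Nat.card (Pset p c k) : ℂ) ^ (p - 1) := by
    rw [Finset.sum_boole]
    have hfil : (Finset.univ.filter
        fun t : {j : Fin p // j ≠ i0} → Perm (Om p k) => ∀ j, t j ∈ Pset p c k) =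
        Fintype.piFinset (fun _ => (Pset p c k).toFinset) := by
      ext t
      simp [Fintype.mem_piFinset, Set.mem_toFinset]
    rw [hfil, Fintype.card_piFinset]
    have hcardsub : Fintype.card {j : Fin p // j ≠ i0} = p - 1 := by
      have := Fintype.card_subtype_compl (fun j : Fin p => j = i0)
      rw [Fintype.card_subtype_eq, Fintype.card_fin] at this
      exact this
    rw [Finset.prod_const, Finset.card_univ, hcardsub]
    rw [Set.toFinset_card, Nat.card_eq_fintype_card]
    push_cast
    ring
  rw [hcount, GamFC]
  ring
end R2
section R2b
variable {p : ℕ} {c : Perm (Fin p)}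
variable (ψ' : ℕ → (↥(Subgroup.zpowers c) →* ℂ))

lemma charSum (hp : p.Prime) (hc : IsFullCycle c) (χ : ↥(Subgroup.zpowers c) →* ℂ) :
    ∑ σ : Perm (Fin p), (if σ ∈ Subgroup.zpowers c ∧ σ ≠ 1 then topVal p c χ σ else 0) =
    (if χ = 1 then (p : ℂ) else 0) - 1 := by
  classical
  have h2 : 2 ≤ Fintype.card (Fin p) := by rw [Fintype.card_fin]; exact hp.two_le
  have hcord : orderOf c = p := by rw [hc.orderOf_eq h2, Fintype.card_fin]
  have hcard : Fintype.card ↥(Subgroup.zpowers c) = p := by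
    rw [← Nat.card_eq_fintype_card, Nat.card_zpowers, hcord]
  have hre : ∑ σ : Perm (Fin p), (if σ ∈ Subgroup.zpowers c ∧ σ ≠ 1 then topVal p c χ σ else 0)
      = ∑ s : ↥(Subgroup.zpowers c),
        (if (s : Perm (Fin p)) ∈ Subgroup.zpowers c ∧ (s : Perm (Fin p)) ≠ 1 then
          topVal p c χ (s : Perm (Fin p)) else 0) := by
    apply sum_reindex (fun s : ↥(Subgroup.zpowers c) => (s : Perm (Fin p)))
    · intro a b _ hab
      exact Subtype.ext hab
    · intro σ hσ
      by_cases h : σ ∈ Subgroup.zpowers c ∧ σ ≠ 1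
      · exact ⟨⟨σ, h.1⟩, rfl⟩
      · rw [if_neg h] at hσ; exact absurd rfl hσ
  rw [hre]
  have hterm : ∀ s : ↥(Subgroup.zpowers c),
      (if (s : Perm (Fin p)) ∈ Subgroup.zpowers c ∧ (s : Perm (Fin p)) ≠ 1 then
        topVal p c χ (s : Perm (Fin p)) else 0) = χ s - (if s = 1 then χ s else 0) := by
    intro s
    have hmem : (s : Perm (Fin p)) ∈ Subgroup.zpowers c := s.2
    have htv : topVal p c χ (s : Perm (Fin p)) = χ s := by
      rw [topVal_mem χ hmem]
    have hne : ((s : Perm (Fin p)) ≠ 1) ↔ s ≠ 1 := by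
      constructor
      · intro h h1; exact h (h1 ▸ rfl)
      · intro h h1; exact h (Subtype.ext h1)
    by_cases h1 : s = 1
    · rw [if_neg (fun hh => (hne.mp hh.2) h1), if_pos h1]
      ring
    · rw [if_pos ⟨hmem, hne.mpr h1⟩, if_neg h1, htv]
      ring
  rw [Finset.sum_congr rfl (fun s _ => hterm s), Finset.sum_sub_distrib]
  rw [Finset.sum_ite_eq' Finset.univ (1 : ↥(Subgroup.zpowers c)) (fun s => χ s)]
  rw [if_pos (Finset.mem_univ _), map_one, sum_char, hcard]

/-- Recursion for the full-cycle sum. -/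
lemma GamFC_succ (hp : p.Prime) (hc : IsFullCycle c) (k : ℕ) :
    GamFC p c ψ' (k+1) =
      ((if ψ' k = 1 then (p : ℂ) else 0) - 1) *
        ((Nat.card (Pset p c k) : ℂ) ^ (p - 1) * GamFC p c ψ' k) := by
  classical
  have hne := Om_nonempty (p := p) hp.pos k
  set j₀ : Fin p := ⟨0, hp.pos⟩
  set X : Perm (Om p k) → ℂ := XChar p c k (fun i : Fin k => ψ' i) with hX
  set F : Perm (Om p (k+1)) → ℂ := fun x =>
    if x ∈ Pset p c (k+1) ∧ IsFullCycle x then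
      XChar p c (k+1) (fun i : Fin (k+1) => ψ' i) x else 0 with hF
  set W : Perm (Fin p) × (Fin p → Perm (Om p k)) → Perm (Om p (k+1)) :=
    fun sf => wrP sf.2 sf.1 with hW
  have hcastψ : (fun i : Fin k => ψ' (((Fin.castSucc i) : Fin (k+1)) : ℕ))
      = fun i : Fin k => ψ' i := by
    funext i; rw [Fin.coe_castSucc]
  have key : ∀ (σ : Perm (Fin p)) (f : Fin p → Perm (Om p k)), F (W (σ, f)) =
      if σ ∈ Subgroup.zpowers c ∧ σ ≠ 1 then
        topVal p c (ψ' k) σ *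
          (if (∀ i, f i ∈ Pset p c k) ∧ IsFullCycle (cyp f σ p j₀) then
            ∏ i : Fin p, X (f i) else 0)
      else 0 := by
    intro σ f
    have hWsf : W (σ, f) = wrP f σ := rfl
    have hval : XChar p c (k+1) (fun i : Fin (k+1) => ψ' i) (wrP f σ)
        = (∏ i : Fin p, X (f i)) * topVal p c (ψ' k) σ := by
      rw [XChar_wrP hp.pos]
      congr 1
    simp only [hF, hWsf]
    by_cases hσZ : σ ∈ Subgroup.zpowers c
    swap
    · rw [if_neg (fun h => hσZ ((wrP_mem_Pset_iff hp.pos).mp h.1).2),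
        if_neg (fun h => hσZ h.1)]
    by_cases hσ1 : σ = 1
    · subst hσ1
      rw [if_neg (show ¬((1 : Perm (Fin p)) ∈ Subgroup.zpowers c ∧ (1 : Perm (Fin p)) ≠ 1)
        from fun h => h.2 rfl)]
      rw [if_neg]
      rintro ⟨_, hfc⟩
      exact not_isFullCycle_wrP_one hp.two_le f hfc
    · rw [if_pos (show σ ∈ Subgroup.zpowers c ∧ σ ≠ 1 from ⟨hσZ, hσ1⟩)]
      have hiff : IsFullCycle (wrP f σ) ↔ IsFullCycle (cyp f σ p j₀) :=
        isFullCycle_wrP_iff hp hc hσZ hσ1 f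
      by_cases hcond : (∀ i, f i ∈ Pset p c k) ∧ IsFullCycle (cyp f σ p j₀)
      · refine (if_pos (show wrP f σ ∈ Pset p c (k+1) ∧ IsFullCycle (wrP f σ) from
          ⟨(wrP_mem_Pset_iff hp.pos).mpr ⟨hcond.1, hσZ⟩, hiff.mpr hcond.2⟩)).trans ?_
        rw [if_pos hcond, hval]
        ring
      · rw [if_neg hcond, mul_zero, if_neg]
        rintro ⟨hmem, hfc⟩
        exact hcond ⟨((wrP_mem_Pset_iff hp.pos).mp hmem).1, hiff.mp hfc⟩
  have hre : ∑ x : Perm (Om p (k+1)), F x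
      = ∑ sf : Perm (Fin p) × (Fin p → Perm (Om p k)), F (W sf) := by
    apply sum_reindex
    · rintro ⟨σ, f⟩ ⟨σ', f'⟩ _ hWW
      obtain ⟨h1, h2⟩ := wrP_injective (show wrP f σ = wrP f' σ' from hWW)
      rw [Prod.ext_iff]
      exact ⟨h2, h1⟩
    · intro x hFx
      simp only [hF] at hFx
      by_cases hcond : x ∈ Pset p c (k+1) ∧ IsFullCycle x
      swap
      · rw [if_neg hcond] at hFx; exact absurd rfl hFx
      obtain ⟨⟨f, σ, hf, hσ, rfl⟩, _⟩ := hcond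
      exact ⟨(σ, f), rfl⟩
  have hT : ∀ σ : Perm (Fin p),
      (∑ f : Fin p → Perm (Om p k), F (W (σ, f))) =
      (if σ ∈ Subgroup.zpowers c ∧ σ ≠ 1 then topVal p c (ψ' k) σ else 0) *
        ((Nat.card (Pset p c k) : ℂ) ^ (p - 1) * GamFC p c ψ' k) := by
    intro σ
    by_cases hσ : σ ∈ Subgroup.zpowers c ∧ σ ≠ 1
    · rw [Finset.sum_congr rfl (fun f _ => key σ f)]
      simp only [if_pos hσ]
      rw [← Finset.mul_sum, Tsum ψ' hp hc k hσ.1 hσ.2]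
    · rw [Finset.sum_congr rfl (fun f _ => key σ f)]
      simp only [if_neg hσ]
      simp
  calc GamFC p c ψ' (k+1) = ∑ x : Perm (Om p (k+1)), F x := rfl
    _ = ∑ sf : Perm (Fin p) × (Fin p → Perm (Om p k)), F (W sf) := hre
    _ = ∑ σ : Perm (Fin p), ∑ f : Fin p → Perm (Om p k), F (W (σ, f)) :=
        Fintype.sum_prod_type _
    _ = ∑ σ : Perm (Fin p),
        (if σ ∈ Subgroup.zpowers c ∧ σ ≠ 1 then topVal p c (ψ' k) σ else 0) *
          ((Nat.card (Pset p c k) : ℂ) ^ (p - 1) * GamFC p c ψ' k) :=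
        Finset.sum_congr rfl (fun σ _ => hT σ)
    _ = ((if ψ' k = 1 then (p : ℂ) else 0) - 1) *
        ((Nat.card (Pset p c k) : ℂ) ^ (p - 1) * GamFC p c ψ' k) := by
        rw [← Finset.sum_mul, charSum hp hc]
end R2b
section Final
variable {p : ℕ} {c : Perm (Fin p)}
variable (ψ' : ℕ → (↥(Subgroup.zpowers c) →* ℂ))

lemma Gam_shift (hp : p.Prime) (hc : IsFullCycle c) (l : ℕ) (hl : 1 ≤ l) :
    ∀ d, Gam p c ψ' (l + d) l = (p : ℂ) ^ d * Gam p c ψ' l l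
  | 0 => by simp
  | (d+1) => by
      have h1 : l + (d + 1) = (l + d) + 1 := by ring
      rw [h1, Gam_succ ψ' hp hc (l + d) l hl (by omega), Gam_shift hp hc l hl d,
        pow_succ]
      ring

lemma sum_geom_aux (hp : 0 < p) : ∀ l : ℕ,
    (∑ m ∈ Finset.range l, (∑ i ∈ Finset.range m, p ^ i) * (p - 1)) + l
      = ∑ i ∈ Finset.range l, p ^ i
  | 0 => by simp
  | (l+1) => by
      have ih := sum_geom_aux hp l
      have hg := geom_succ p l
      have e0 : (∑ i ∈ Finset.range l, p ^ i) * (p - 1)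
          = (∑ i ∈ Finset.range l, p ^ i) * p - (∑ i ∈ Finset.range l, p ^ i) := by
        rw [Nat.mul_sub, mul_one]
      have e2 : (∑ i ∈ Finset.range l, p ^ i) ≤ (∑ i ∈ Finset.range l, p ^ i) * p :=
        Nat.le_mul_of_pos_right _ hp
      rw [Finset.sum_range_succ (f := fun m => (∑ i ∈ Finset.range m, p ^ i) * (p - 1)),
        Finset.sum_range_succ (f := fun i => p ^ i)]
      rw [Finset.sum_range_succ (f := fun i => p ^ i)] at hg
      omega

lemma GamFC_closed (hp : p.Prime) (hc : IsFullCycle c) (u : ℕ → ℕ) (hu : ∀ m, u m ≤ 1) :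
    ∀ l : ℕ, (∀ m, m < l → (ψ' m = 1 ↔ u m = 1)) →
    GamFC p c ψ' l = ∏ m ∈ Finset.range l,
      (((p : ℂ) * u m - 1) * ((p : ℂ) ^ (∑ i ∈ Finset.range m, p ^ i)) ^ (p - 1))
  | 0, _ => by simpa using GamFC_zero ψ'
  | (l+1), hψu => by
      rw [GamFC_succ ψ' hp hc l, Finset.prod_range_succ,
        GamFC_closed hp hc u hu l (fun m hm => hψu m (by omega))]
      have hchar : (if ψ' l = 1 then (p : ℂ) else 0) - 1 = (p : ℂ) * u l - 1 := by
        rcases Nat.le_one_iff_eq_zero_or_eq_one.mp (hu l) with h0 | h1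
        · rw [if_neg, h0]
          · norm_num
          · intro h1
            have := (hψu l (by omega)).mp h1
            omega
        · rw [if_pos ((hψu l (by omega)).mpr h1), h1]
          norm_num
      have hcard : (Nat.card (Pset p c l) : ℂ) ^ (p - 1)
          = ((p : ℂ) ^ (∑ i ∈ Finset.range l, p ^ i)) ^ (p - 1) := by
        rw [card_Pset hp hc l]
        push_cast
        rfl
      rw [hchar, hcard]
      ring
end Final

theorem stmt5 (p k l : ℕ) (hp : p.Prime) (hk : 1 ≤ k) (hl1 : 1 ≤ l) (hlk : l ≤ k)
    (c : Perm (Fin p)) (hc : IsFullCycle c)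
    (u : ℕ → ℕ) (hu : ∀ j, u j ≤ 1)
    (ψ : Fin k → (↥(Subgroup.zpowers c) →* ℂ))
    (hψ : ∀ j : Fin k, ψ j = 1 ↔ u (j : ℕ) = 1) :
    ∑ x : Perm (Om p k),
        (if x ∈ Pset p c k ∧ x.cycleType = {p ^ l} then XChar p c k ψ x else 0) =
      (p : ℂ) ^ k * ((p : ℂ) ^ (∑ i ∈ Finset.range l, p ^ i) * ((p : ℂ) ^ (2 * l))⁻¹ *
        ∏ m ∈ Finset.range l, ((p : ℂ) * u m - 1)) := by
  classical
  set ψ'' : ℕ → (↥(Subgroup.zpowers c) →* ℂ) :=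
    fun n => if h : n < k then ψ ⟨n, h⟩ else 1 with hψ''
  have hψeq : (fun i : Fin k => ψ'' (i : ℕ)) = ψ := by
    funext i
    simp only [hψ'', i.2, dif_pos]
  have hLHS : (∑ x : Perm (Om p k),
      (if x ∈ Pset p c k ∧ x.cycleType = {p ^ l} then XChar p c k ψ x else 0))
      = Gam p c ψ'' k l := by
    rw [Gam, hψeq]
  rw [hLHS]
  obtain ⟨d, rfl⟩ : ∃ d, k = l + d := ⟨k - l, by omega⟩
  rw [Gam_shift ψ'' hp hc l hl1 d]
  rw [← GamFC_eq_Gam ψ'' hp l hl1]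
  have hψu : ∀ m, m < l → (ψ'' m = 1 ↔ u m = 1) := by
    intro m hm
    have hmk : m < l + d := by omega
    have : ψ'' m = ψ ⟨m, hmk⟩ := by simp only [hψ'', hmk, dif_pos]
    rw [this]
    exact hψ ⟨m, hmk⟩
  rw [GamFC_closed ψ'' hp hc u hu l hψu]
  -- algebra
  have hp0 : (p : ℂ) ≠ 0 := by
    exact_mod_cast hp.ne_zero
  rw [Finset.prod_mul_distrib]
  have hpowprod : ∏ m ∈ Finset.range l,
      ((p : ℂ) ^ (∑ i ∈ Finset.range m, p ^ i)) ^ (p - 1)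
      = (p : ℂ) ^ (∑ m ∈ Finset.range l, (∑ i ∈ Finset.range m, p ^ i) * (p - 1)) := by
    rw [← Finset.prod_pow_eq_pow_sum]
    apply Finset.prod_congr rfl
    intro m _
    rw [pow_mul]
  rw [hpowprod]
  have hE := sum_geom_aux hp.pos l
  rw [show (∑ i ∈ Finset.range l, p ^ i)
      = (∑ m ∈ Finset.range l, (∑ i ∈ Finset.range m, p ^ i) * (p - 1)) + l from hE.symm]
  have hp2l : ((p : ℂ) ^ (2 * l)) ≠ 0 := pow_ne_zero _ hp0
  field_simp
  ring
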